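/- Let b > 0 and let α : [0,b] → ℝ be differentiable with |α'(t)| ≤ L on [0,b], and let C be a constant such that x·|ln x| ≤ C for all x ∈ (0,b]. Then for every fixed z ∈ (0,1] and every t ∈ (0,b), the derivative in t of (tz)^{α(0)−α(tz)} satisfies |d/dt (tz)^{α(0)−α(tz)}| = |(tz)^{α(0)−α(tz)} · z · (−α'(tz) ln(tz) + (α(0)−α(tz))/(tz))| ≤ e^{L·C} · L · (|ln(tz)| + 1). -/

import Mathlib

open Set

/-- for fixed `z ∈ (0,1]` and `t ∈ (0,b)`, the map
`t ↦ (tz)^(α 0 - α (tz))` has derivative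
`(tz)^(α 0 - α (tz)) · z · (-α'(tz) ln(tz) + (α 0 - α (tz))/(tz))`, whose absolute
value is at most `exp(L C) · L · (|ln (tz)| + 1)`. -/
theorem stmt4 (b L C : ℝ) (hb : 0 < b) (α α' : ℝ → ℝ)
    (hα_diff : ∀ t ∈ Icc (0:ℝ) b, HasDerivAt α (α' t) t)
    (hα_lip : ∀ t ∈ Icc (0:ℝ) b, |α' t| ≤ L)
    (hC : ∀ x ∈ Ioc (0:ℝ) b, x * |Real.log x| ≤ C) :
    ∀ z ∈ Ioc (0:ℝ) 1, ∀ t ∈ Ioo (0:ℝ) b,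
      HasDerivAt (fun τ : ℝ => (τ * z) ^ (α 0 - α (τ * z)))
        ((t * z) ^ (α 0 - α (t * z)) * z *
          (-(α' (t * z)) * Real.log (t * z) + (α 0 - α (t * z)) / (t * z))) t ∧
      |(t * z) ^ (α 0 - α (t * z)) * z *
          (-(α' (t * z)) * Real.log (t * z) + (α 0 - α (t * z)) / (t * z))| ≤
        Real.exp (L * C) * L * (|Real.log (t * z)| + 1) := by
  intro z hz t ht
  have hz0 : 0 < z := hz.1
  have hz1 : z ≤ 1 := hz.2
  have ht0 : 0 < t := ht.1
  have htb : t < b := ht.2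
  have hx0 : 0 < t * z := mul_pos ht0 hz0
  have hxb : t * z ≤ b := le_trans (by nlinarith) htb.le
  have hxmem : t * z ∈ Icc (0:ℝ) b := ⟨hx0.le, hxb⟩
  set x := t * z with hxdef
  set p := α 0 - α x with hpdef
  have hL0 : 0 ≤ L := le_trans (abs_nonneg _) (hα_lip 0 ⟨le_refl 0, hb.le⟩)
  -- |p| ≤ L * x by MVT
  have hmvt : ∀ y ∈ Icc (0:ℝ) x, ‖α y - α 0‖ ≤ L * (y - 0) := by
    apply norm_image_sub_le_of_norm_deriv_le_segment' (f' := α')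
    · intro y hy
      exact (hα_diff y ⟨hy.1, hy.2.trans hxb⟩).hasDerivWithinAt
    · intro y hy
      exact hα_lip y ⟨hy.1, hy.2.le.trans hxb⟩
  have hp : |p| ≤ L * x := by
    have := hmvt x ⟨hx0.le, le_refl x⟩
    rw [Real.norm_eq_abs] at this
    calc |p| = |α x - α 0| := by rw [hpdef, abs_sub_comm]
    _ ≤ L * (x - 0) := this
    _ = L * x := by ring
  -- bound on x^p
  have hxC : x * |Real.log x| ≤ C := hC x ⟨hx0, hxb⟩
  have hrpow : x ^ p ≤ Real.exp (L * C) := by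
    rw [Real.rpow_def_of_pos hx0]
    apply Real.exp_le_exp.2
    calc Real.log x * p = p * Real.log x := mul_comm _ _
    _ ≤ |p * Real.log x| := le_abs_self _
    _ = |p| * |Real.log x| := abs_mul _ _
    _ ≤ (L * x) * |Real.log x| := by
        apply mul_le_mul_of_nonneg_right hp (abs_nonneg _)
    _ = L * (x * |Real.log x|) := by ring
    _ ≤ L * C := mul_le_mul_of_nonneg_left hxC hL0
  -- the derivative
  have hmul : HasDerivAt (fun τ : ℝ => τ * z) z t := hasDerivAt_mul_const z
  have hcomp : HasDerivAt (fun τ : ℝ => α (τ * z)) (α' x * z) t :=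
    (hα_diff x hxmem).comp t hmul
  have hg : HasDerivAt (fun τ : ℝ => α 0 - α (τ * z)) (-(α' x * z)) t := by
    exact hcomp.const_sub (α 0)
  have hd := hmul.rpow hg hx0
  have hderiv : HasDerivAt (fun τ : ℝ => (τ * z) ^ (α 0 - α (τ * z)))
      (x ^ p * z * (-(α' x) * Real.log x + p / x)) t := by
    convert hd using 1
    rw [Real.rpow_sub_one hx0.ne']
    simp only [hpdef, hxdef]
    ring
  refine ⟨hderiv, ?_⟩
  -- the bound
  have hinner : |(-(α' x) * Real.log x + p / x)| ≤ L * (|Real.log x| + 1) := by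
    calc |(-(α' x) * Real.log x + p / x)| ≤ |(-(α' x)) * Real.log x| + |p / x| :=
          abs_add_le _ _
    _ = |α' x| * |Real.log x| + |p| / x := by
        rw [abs_mul, abs_neg, abs_div, abs_of_pos hx0]
    _ ≤ L * |Real.log x| + (L * x) / x := by
        apply add_le_add
        · exact mul_le_mul_of_nonneg_right (hα_lip x hxmem) (abs_nonneg _)
        · exact div_le_div_of_nonneg_right hp hx0.le
    _ = L * |Real.log x| + L := by field_simp
    _ = L * (|Real.log x| + 1) := by ring
  have hxp_pos : (0:ℝ) < x ^ p := Real.rpow_pos_of_pos hx0 p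
  calc |x ^ p * z * (-(α' x) * Real.log x + p / x)|
      = x ^ p * z * |(-(α' x) * Real.log x + p / x)| := by
        rw [abs_mul, abs_mul, abs_of_pos hxp_pos, abs_of_pos hz0]
    _ ≤ Real.exp (L * C) * 1 * (L * (|Real.log x| + 1)) := by
        apply mul_le_mul
        · exact mul_le_mul hrpow hz1 hz0.le (Real.exp_pos _).le
        · exact hinner
        · exact abs_nonneg _
        · positivity
    _ = Real.exp (L * C) * L * (|Real.log x| + 1) := by ring
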